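/- Let q ≥ 2 be a real number (or an integer), and let n₁,...,n_s be positive integers with n₁ + ... + n_s = n. Then |GLₙ(F_q)| / (|GL_{n₁}(F_q)|·...·|GL_{n_s}(F_q)|) ≤ q^{2·Σ_{i<j} n_i n_j + Σ_{i=2}^{s} n_i}, where |GL_m(F_q)| = q^{m(m−1)/2}·(q−1)(q²−1)···(q^m −1). -/

import Mathlib

private lemma sum_odd_sq (t : ℕ) : ∑ j ∈ Finset.range t, (2 * j + 1) = t * t := by
  induction t with
  | zero => simp
  | succ t ih =>
    rw [Finset.sum_range_succ, ih]
    ring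

private lemma sum_even_sq (t : ℕ) : (∑ j ∈ Finset.range t, 2 * j) + t = t * t := by
  induction t with
  | zero => simp
  | succ t ih =>
    rw [Finset.sum_range_succ]
    have : (t + 1) * (t + 1) = t * t + 2 * t + 1 := by ring
    omega

private lemma sq_split (s : ℕ) (m : Fin s → ℕ) :
    (∑ i, m i) * (∑ i, m i) =
      (∑ i, m i * m i) +
        2 * ∑ p ∈ Finset.univ.filter (fun p : Fin s × Fin s => p.1 < p.2), m p.1 * m p.2 := by
  have key : (∑ i, m i) * (∑ i, m i)
      = ∑ p : Fin s × Fin s, m p.1 * m p.2 := by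
    rw [Fintype.sum_mul_sum]
    rw [← Finset.sum_product']
    rw [Finset.univ_product_univ]
  have h1 := Finset.sum_filter_add_sum_filter_not (Finset.univ : Finset (Fin s × Fin s))
      (fun p => p.1 < p.2) (fun p => m p.1 * m p.2)
  have h2 := Finset.sum_filter_add_sum_filter_not
      (Finset.univ.filter (fun p : Fin s × Fin s => ¬ p.1 < p.2))
      (fun p => p.2 < p.1) (fun p => m p.1 * m p.2)
  rw [Finset.filter_filter, Finset.filter_filter] at h2
  have hgt : (Finset.univ.filter (fun p : Fin s × Fin s => ¬ p.1 < p.2 ∧ p.2 < p.1))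
      = Finset.univ.filter (fun p : Fin s × Fin s => p.2 < p.1) := by
    apply Finset.filter_congr
    intro p _
    simp only [Fin.lt_def, eq_iff_iff]
    omega
  have heq : (Finset.univ.filter (fun p : Fin s × Fin s => ¬ p.1 < p.2 ∧ ¬ p.2 < p.1))
      = Finset.univ.filter (fun p : Fin s × Fin s => p.1 = p.2) := by
    apply Finset.filter_congr
    intro p _
    simp only [Fin.lt_def, Fin.ext_iff, eq_iff_iff]
    omega
  rw [hgt, heq] at h2
  have hdiag : ∑ p ∈ Finset.univ.filter (fun p : Fin s × Fin s => p.1 = p.2), m p.1 * m p.2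
      = ∑ i, m i * m i := by
    refine Finset.sum_bij' (fun p _ => p.1) (fun i _ => (i, i))
      (fun a ha => Finset.mem_univ _) (fun a ha => ?_) (fun a ha => ?_)
      (fun a ha => rfl) (fun a ha => ?_)
    · simp
    · simp only [Finset.mem_filter] at ha
      obtain ⟨a1, a2⟩ := a
      simp_all
    · simp only [Finset.mem_filter] at ha
      obtain ⟨a1, a2⟩ := a
      simp_all
  have hswap : ∑ p ∈ Finset.univ.filter (fun p : Fin s × Fin s => p.2 < p.1), m p.1 * m p.2
      = ∑ p ∈ Finset.univ.filter (fun p : Fin s × Fin s => p.1 < p.2), m p.1 * m p.2 := by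
    refine Finset.sum_bij' (fun p _ => Prod.swap p) (fun p _ => Prod.swap p)
      (fun a ha => ?_) (fun a ha => ?_) (fun a ha => Prod.swap_swap a)
      (fun a ha => Prod.swap_swap a) (fun a ha => Nat.mul_comm _ _)
    · simp only [Finset.mem_filter, Finset.mem_univ, true_and] at ha ⊢
      exact ha
    · simp only [Finset.mem_filter, Finset.mem_univ, true_and] at ha ⊢
      exact ha
  rw [key]
  rw [hdiag, hswap] at h2
  omega

/-- With `G t = |GL_t(F_q)| = q^{t(t-1)/2} (q-1)(q²-1)⋯(q^t-1)`, for positive integers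
`n₁ + ⋯ + n_s = n` one has `G n ≤ (∏ᵢ G nᵢ) · q^{2∑_{i<j} nᵢnⱼ + ∑_{i≥2} nᵢ}`,
i.e. the quotient `G n / ∏ᵢ G nᵢ` is bounded by that power of `q`. -/
theorem stmt_12 (q : ℕ) (hq : 2 ≤ q) (s n : ℕ) (hs : 1 ≤ s)
    (m : Fin s → ℕ) (hm : ∀ i, 1 ≤ m i) (hsum : (∑ i, m i) = n)
    (G : ℕ → ℕ)
    (hG : ∀ t, G t = q ^ (t * (t - 1) / 2) * ∏ j ∈ Finset.range t, (q ^ (j + 1) - 1)) :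
    G n ≤ (∏ i, G (m i)) *
        q ^ (2 * (∑ p ∈ Finset.univ.filter (fun p : Fin s × Fin s => p.1 < p.2),
              m p.1 * m p.2) +
          ∑ i ∈ Finset.univ.filter (fun i : Fin s => (i : ℕ) ≠ 0), m i) := by
  have hq1 : 1 ≤ q := by omega
  -- rewrite G as a single product
  have hGa : ∀ t, G t = ∏ j ∈ Finset.range t, (q ^ j * (q ^ (j + 1) - 1)) := by
    intro t
    rw [hG, Finset.prod_mul_distrib, Finset.prod_pow_eq_pow_sum]
    congr 2
    have := Finset.sum_range_id_mul_two t
    omega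
  -- term bounds
  have hpow : ∀ j : ℕ, q ^ j + q ^ j ≤ q ^ (j + 1) := by
    intro j
    rw [pow_succ]
    calc q ^ j + q ^ j = q ^ j * 2 := by ring
    _ ≤ q ^ j * q := Nat.mul_le_mul_left _ hq
  have hl : ∀ j : ℕ, q ^ (2 * j) ≤ q ^ j * (q ^ (j + 1) - 1) := by
    intro j
    have h1 : 1 ≤ q ^ j := Nat.one_le_pow _ _ (by omega)
    have h2 := hpow j
    calc q ^ (2 * j) = q ^ j * q ^ j := by rw [two_mul, pow_add]
    _ ≤ q ^ j * (q ^ (j + 1) - 1) := Nat.mul_le_mul_left _ (by omega)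
  have hu : ∀ j : ℕ, q ^ j * (q ^ (j + 1) - 1) ≤ q ^ (2 * j + 1) := by
    intro j
    calc q ^ j * (q ^ (j + 1) - 1) ≤ q ^ j * q ^ (j + 1) := Nat.mul_le_mul_left _ (by omega)
    _ = q ^ (2 * j + 1) := by rw [← pow_add]; ring_nf
  -- the distinguished index 0
  set z : Fin s := ⟨0, hs⟩ with hz
  have hm0n : m z ≤ n := by
    rw [← hsum]
    exact Finset.single_le_sum (fun i _ => Nat.zero_le (m i)) (Finset.mem_univ z)
  have hfilter : Finset.univ.filter (fun i : Fin s => (i : ℕ) ≠ 0)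
      = Finset.univ.erase z := by
    ext i
    simp [Fin.ext_iff, hz]
  -- Step A : G n ≤ G (m z) * q ^ D
  have hA : G n ≤ G (m z) * q ^ (∑ j ∈ Finset.Ico (m z) n, (2 * j + 1)) := by
    rw [hGa n, hGa (m z), ← Finset.prod_pow_eq_pow_sum]
    rw [Finset.range_eq_Ico, ← Finset.prod_Ico_consecutive _ (Nat.zero_le (m z)) hm0n,
      ← Finset.range_eq_Ico]
    exact Nat.mul_le_mul_left _ (Finset.prod_le_prod' fun j _ => hu j)
  -- Step B : q ^ (∑ 2j) ≤ G (m i)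
  have hB : ∀ i : Fin s, q ^ (∑ j ∈ Finset.range (m i), 2 * j) ≤ G (m i) := by
    intro i
    rw [hGa, ← Finset.prod_pow_eq_pow_sum]
    exact Finset.prod_le_prod' fun j _ => hl j
  -- abbreviations
  set S := ∑ p ∈ Finset.univ.filter (fun p : Fin s × Fin s => p.1 < p.2), m p.1 * m p.2 with hS
  -- exponent arithmetic
  have e1 : (∑ j ∈ Finset.Ico (m z) n, (2 * j + 1)) + m z * m z = n * n := by
    have h0 : (∑ j ∈ Finset.range (m z), (2 * j + 1))
        + ∑ j ∈ Finset.Ico (m z) n, (2 * j + 1) = ∑ j ∈ Finset.range n, (2 * j + 1) := by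
      rw [Finset.range_eq_Ico, Finset.range_eq_Ico]
      exact Finset.sum_Ico_consecutive (fun j => 2 * j + 1) (Nat.zero_le _) hm0n
    have h1 := sum_odd_sq (m z)
    have h2 := sum_odd_sq n
    omega
  have e2 : (∑ i ∈ Finset.univ.erase z, (∑ j ∈ Finset.range (m i), 2 * j))
      + ∑ i ∈ Finset.univ.erase z, m i = ∑ i ∈ Finset.univ.erase z, m i * m i := by
    rw [← Finset.sum_add_distrib]
    exact Finset.sum_congr rfl fun i _ => sum_even_sq (m i)
  have e3 : m z * m z + ∑ i ∈ Finset.univ.erase z, m i * m i = ∑ i, m i * m i :=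
    Finset.add_sum_erase Finset.univ (fun i => m i * m i) (Finset.mem_univ z)
  have e4 : n * n = (∑ i, m i * m i) + 2 * S := by
    rw [← hsum]; exact sq_split s m
  have eD : (∑ j ∈ Finset.Ico (m z) n, (2 * j + 1))
      ≤ (∑ i ∈ Finset.univ.erase z, (∑ j ∈ Finset.range (m i), 2 * j))
        + (2 * S + ∑ i ∈ Finset.univ.erase z, m i) := by omega
  -- combine
  calc G n ≤ G (m z) * q ^ (∑ j ∈ Finset.Ico (m z) n, (2 * j + 1)) := hA
  _ ≤ G (m z) * q ^ ((∑ i ∈ Finset.univ.erase z, (∑ j ∈ Finset.range (m i), 2 * j))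
        + (2 * S + ∑ i ∈ Finset.univ.erase z, m i)) :=
      Nat.mul_le_mul_left _ (Nat.pow_le_pow_right hq1 eD)
  _ = G (m z) * ((∏ i ∈ Finset.univ.erase z, q ^ (∑ j ∈ Finset.range (m i), 2 * j))
        * q ^ (2 * S + ∑ i ∈ Finset.univ.erase z, m i)) := by
      rw [pow_add, Finset.prod_pow_eq_pow_sum]
  _ ≤ G (m z) * ((∏ i ∈ Finset.univ.erase z, G (m i))
        * q ^ (2 * S + ∑ i ∈ Finset.univ.erase z, m i)) := by
      gcongr with i hi
      exact hB i
  _ = (∏ i, G (m i)) * q ^ (2 * S + ∑ i ∈ Finset.univ.erase z, m i) := by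
      rw [← Finset.mul_prod_erase Finset.univ _ (Finset.mem_univ z), mul_assoc]
  _ = (∏ i, G (m i)) * q ^ (2 * S + ∑ i ∈ Finset.univ.filter (fun i : Fin s => (i : ℕ) ≠ 0), m i) := by
      rw [hfilter]
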